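/- If G is a Q-game, then G + G + G is a Q-game. More specifically, if G is a Q-game then G + G + G is not an O-game (i.e. not of type 2). -/

import Mathlib

/-- Three-player impartial games: well-founded game trees. -/
inductive G3 : Type 1 where
  | mk : (ι : Type) → (ι → G3) → G3

namespace G3

/-- The index type of options (moves) of a game. -/
def moves : G3 → Type
  | mk ι _ => ι

/-- The option of a game corresponding to a move. -/
def moveFn : (g : G3) → moves g → G3
  | mk _ f => f

/-- Disjunctive sum: move in exactly one component. -/
noncomputable def add : G3 → G3 → G3 :=
  G3.rec (fun ι f ihf =>
    G3.rec (fun κ g ihg =>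
      mk (ι ⊕ κ) (fun x =>
        match x with
        | Sum.inl i => ihf i (mk κ g)
        | Sum.inr j => ihg j)))

/-- The four outcome types of a three-player impartial game. -/
inductive PType : Type
  | N | O | P | Q
deriving DecidableEq

open Classical in
/-- The type of a game: `N` iff some option is a `P`-game; `O` iff it has at least
one option and all options are `N`-games; `P` iff all options are `O`-games;
`Q` otherwise. -/
noncomputable def typ : G3 → PType
  | mk ι f =>
    if ∃ i, typ (f i) = PType.P then PType.N
    else if Nonempty ι ∧ ∀ i, typ (f i) = PType.N then PType.O
    else if ∀ i, typ (f i) = PType.O then PType.P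
    else PType.Q

/-- The Nim heap of size `n`: options are heaps of sizes `0, …, n-1`. -/
def nim : ℕ → G3
  | n => mk (Fin n) (fun i => nim i)
termination_by n => n
decreasing_by exact i.isLt

/-- The sum of `n` Nim heaps of size 1. -/
noncomputable def ones : ℕ → G3
  | 0 => nim 0
  | n + 1 => add (ones n) (nim 1)

/-! ### Auxiliary machinery -/

theorem add_mk (ι : Type) (f : ι → G3) (κ : Type) (g : κ → G3) :
    add (mk ι f) (mk κ g) = mk (ι ⊕ κ) (fun x =>
      match x with
      | Sum.inl i => add (f i) (mk κ g)
      | Sum.inr j => add (mk ι f) (g j)) := rfl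

open PType
noncomputable def Ordinal.nadd (a b : Ordinal.{0}) : Ordinal.{1} :=
  max (IsWellFounded.rank (· < ·) (a, b)) (IsWellFounded.rank (· < ·) (b, a))

infixl:65 " ♯ " => Ordinal.nadd

theorem Ordinal.nadd_comm (a b : Ordinal.{0}) : a ♯ b = b ♯ a := max_comm _ _

theorem Ordinal.nadd_lt_nadd_right {a b : Ordinal.{0}} (h : a < b) (c : Ordinal.{0}) :
    a ♯ c < b ♯ c :=
  max_lt_max (IsWellFounded.rank_lt_of_rel (Prod.mk_lt_mk_iff_left.mpr h))
    (IsWellFounded.rank_lt_of_rel (Prod.mk_lt_mk_iff_right.mpr h))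

theorem Ordinal.nadd_lt_nadd_left {b c : Ordinal.{0}} (h : b < c) (a : Ordinal.{0}) :
    a ♯ b < a ♯ c :=
  max_lt_max (IsWellFounded.rank_lt_of_rel (Prod.mk_lt_mk_iff_right.mpr h))
    (IsWellFounded.rank_lt_of_rel (Prod.mk_lt_mk_iff_left.mpr h))

theorem typ_N_iff (ι : Type) (f : ι → G3) :
    typ (mk ι f) = N ↔ ∃ i, typ (f i) = P := by
  rw [typ]
  split_ifs with h1 h2 h3 <;> simp_all

theorem typ_O_iff (ι : Type) (f : ι → G3) :
    typ (mk ι f) = O ↔ (¬ ∃ i, typ (f i) = P) ∧ Nonempty ι ∧ ∀ i, typ (f i) = N := by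
  rw [typ]
  split_ifs with h1 h2 h3 <;> simp_all <;> exact h2

theorem typ_P_iff (ι : Type) (f : ι → G3) :
    typ (mk ι f) = P ↔ (¬ ∃ i, typ (f i) = P) ∧ ¬(Nonempty ι ∧ ∀ i, typ (f i) = N)
      ∧ ∀ i, typ (f i) = O := by
  rw [typ]
  split_ifs with h1 h2 h3 <;> simp_all <;> exact h2

theorem typ_Q_iff (ι : Type) (f : ι → G3) :
    typ (mk ι f) = Q ↔ (¬ ∃ i, typ (f i) = P) ∧ ¬(Nonempty ι ∧ ∀ i, typ (f i) = N)
      ∧ ¬ ∀ i, typ (f i) = O := by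
  rw [typ]
  split_ifs with h1 h2 h3 <;> simp_all <;> exact h2

theorem Q_nonempty {ι : Type} {f : ι → G3} (h : typ (mk ι f) = Q) : Nonempty ι := by
  obtain ⟨-, -, h3⟩ := (typ_Q_iff ι f).1 h
  by_contra hne
  exact h3 (fun i => absurd ⟨i⟩ hne)

theorem Q_no_P {ι : Type} {f : ι → G3} (h : typ (mk ι f) = Q) (i : ι) :
    typ (f i) ≠ P := by
  obtain ⟨h1, -, -⟩ := (typ_Q_iff ι f).1 h
  exact fun hp => h1 ⟨i, hp⟩

theorem Q_exists_nonN {ι : Type} {f : ι → G3} (h : typ (mk ι f) = Q) :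
    ∃ i, typ (f i) ≠ N := by
  obtain ⟨-, h2, -⟩ := (typ_Q_iff ι f).1 h
  by_contra hc
  push_neg at hc
  exact h2 ⟨Q_nonempty h, hc⟩

theorem Q_exists_nonO {ι : Type} {f : ι → G3} (h : typ (mk ι f) = Q) :
    ∃ i, typ (f i) ≠ O := by
  obtain ⟨-, -, h3⟩ := (typ_Q_iff ι f).1 h
  exact not_forall.1 h3

/-! ### Isomorphism of games -/

inductive Iso : G3 → G3 → Prop
  | mk {ι κ : Type} (f : ι → G3) (g : κ → G3) (e : ι ≃ κ) :
      (∀ i, Iso (f i) (g (e i))) → Iso (mk ι f) (mk κ g)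

theorem typ_iso {x y : G3} (h : Iso x y) : typ x = typ y := by
  induction h with
  | mk f g e h ih =>
    rename_i ι κ
    have hP : (∃ i, typ (f i) = P) ↔ (∃ j, typ (g j) = P) := by
      constructor
      · rintro ⟨i, hi⟩; exact ⟨e i, (ih i) ▸ hi⟩
      · rintro ⟨j, hj⟩
        refine ⟨e.symm j, ?_⟩
        rw [ih (e.symm j), e.apply_symm_apply]; exact hj
    have hNe : Nonempty ι ↔ Nonempty κ := e.nonempty_congr
    have hN : (∀ i, typ (f i) = N) ↔ (∀ j, typ (g j) = N) := by
      constructor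
      · intro hf j
        have := hf (e.symm j); rw [ih (e.symm j), e.apply_symm_apply] at this; exact this
      · intro hg i; rw [ih i]; exact hg (e i)
    have hO : (∀ i, typ (f i) = O) ↔ (∀ j, typ (g j) = O) := by
      constructor
      · intro hf j
        have := hf (e.symm j); rw [ih (e.symm j), e.apply_symm_apply] at this; exact this
      · intro hg i; rw [ih i]; exact hg (e i)
    rw [typ, typ]
    by_cases h1 : ∃ i, typ (f i) = P
    · rw [if_pos h1, if_pos (hP.1 h1)]
    · rw [if_neg h1, if_neg (show ¬∃ j, typ (g j) = P from fun hh => h1 (hP.2 hh))]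
      by_cases h2 : Nonempty ι ∧ ∀ i, typ (f i) = N
      · rw [if_pos h2, if_pos ⟨hNe.1 h2.1, hN.1 h2.2⟩]
      · rw [if_neg h2, if_neg (show ¬(Nonempty κ ∧ ∀ j, typ (g j) = N) from
            fun hh => h2 ⟨hNe.2 hh.1, hN.2 hh.2⟩)]
        by_cases h3 : ∀ i, typ (f i) = O
        · rw [if_pos h3, if_pos (hO.1 h3)]
        · rw [if_neg h3, if_neg (show ¬∀ j, typ (g j) = O from fun hh => h3 (hO.2 hh))]

theorem add_comm_iso (x y : G3) : Iso (add x y) (add y x) := by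
  induction x generalizing y with
  | mk ι f ihf =>
    induction y with
    | mk κ g ihg =>
      rw [add_mk, add_mk]
      refine Iso.mk _ _ (Equiv.sumComm ι κ) ?_
      rintro (i | j)
      · exact ihf i (mk κ g)
      · exact ihg j

theorem add_assoc_iso (x y z : G3) : Iso (add (add x y) z) (add x (add y z)) := by
  induction x generalizing y z with
  | mk ι f ihf =>
    induction y generalizing z with
    | mk κ g ihg =>
      induction z with
      | mk μ m ihm =>
        rw [add_mk, add_mk, add_mk, add_mk]
        refine Iso.mk _ _ (Equiv.sumAssoc ι κ μ) ?_
        rintro ((i | j) | k)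
        · exact ihf i (mk κ g) (mk μ m)
        · exact ihg j (mk μ m)
        · exact ihm k

theorem add_congr_left {x y : G3} (h : Iso x y) : ∀ z, Iso (add x z) (add y z) := by
  induction h with
  | mk f g e hfg ih =>
    rename_i ι κ
    intro z
    induction z with
    | mk μ m ihm =>
      rw [add_mk, add_mk]
      refine Iso.mk _ _ (Equiv.sumCongr e (Equiv.refl μ)) ?_
      rintro (i | k)
      · exact ih i (mk μ m)
      · exact ihm k

theorem typ_add_comm (x y : G3) : typ (add x y) = typ (add y x) :=
  typ_iso (add_comm_iso x y)

theorem typ_add_assoc (x y z : G3) : typ (add (add x y) z) = typ (add x (add y z)) :=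
  typ_iso (add_assoc_iso x y z)

/-! ### Rank -/

noncomputable def rank : G3 → Ordinal.{0}
  | mk ι f => ⨆ i, Order.succ (rank (f i))

theorem rank_lt (ι : Type) (f : ι → G3) (i : ι) : rank (f i) < rank (mk ι f) := by
  rw [show rank (mk ι f) = ⨆ i, Order.succ (rank (f i)) from rfl]
  exact (Order.lt_succ _).trans_le (le_ciSup (Ordinal.bddAbove_range _) i)

/-! ### The addition-table package -/

structure Pk (G H : G3) : Prop where
  e1 : typ G = Q → typ (add G H) ≠ P
  b1 : typ G = N → typ H = Q → typ (add G H) ≠ O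
  b2 : typ G = Q → typ H = N → typ (add G H) ≠ O
  b3 : typ G = Q → typ H = Q → typ (add G H) ≠ N
  b5 : typ G = Q → typ H = P → typ (add G H) ≠ N
  b6 : typ G = Q → typ H = P → typ (add G H) ≠ O
  c1 : typ G = N → typ H = P → typ (add G H) ≠ P
  c2 : typ G = O → typ H = P → typ (add G H) ≠ P
  c3 : typ G = O → typ H = P → typ (add G H) ≠ N
  c4 : typ G = O → typ H = O → typ (add G H) ≠ P
  c5 : typ G = P → typ H = P → typ (add G H) ≠ O
  c7 : typ G = N → typ H = O → typ (add G H) ≠ O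
  c8 : typ G = N → typ H = P → typ (add G H) ≠ O
  c9 : typ G = P → typ H = P → typ (add G H) ≠ N

theorem pk : ∀ G H : G3, Pk G H := by
  suffices h : ∀ (o : Ordinal) (G H : G3), rank G ♯ rank H = o → Pk G H from
    fun G H => h _ G H rfl
  intro o
  induction o using Ordinal.induction with
  | h o IH =>
    intro G H hr
    have IH' : ∀ G' H' : G3, rank G' ♯ rank H' < rank G ♯ rank H → Pk G' H' := by
      intro G' H' hlt
      exact IH _ (hr ▸ hlt) G' H' rfl
    clear IH hr
    cases G with | mk ι f =>
    cases H with | mk κ g =>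
    have m1 : ∀ i, Pk (f i) (mk κ g) := fun i =>
      IH' _ _ (Ordinal.nadd_lt_nadd_right (rank_lt ι f i) _)
    have m2 : ∀ j, Pk (mk ι f) (g j) := fun j =>
      IH' _ _ (Ordinal.nadd_lt_nadd_left (rank_lt κ g j) _)
    have m3 : ∀ i j, Pk (f i) (g j) := fun i j =>
      IH' _ _ ((Ordinal.nadd_lt_nadd_right (rank_lt ι f i) _).trans
        (Ordinal.nadd_lt_nadd_left (rank_lt κ g j) _))
    have m1s : ∀ i, Pk (mk κ g) (f i) := fun i =>
      IH' _ _ (by rw [Ordinal.nadd_comm]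
                  exact Ordinal.nadd_lt_nadd_right (rank_lt ι f i) _)
    have m2s : ∀ j, Pk (g j) (mk ι f) := fun j =>
      IH' _ _ (by rw [Ordinal.nadd_comm]
                  exact Ordinal.nadd_lt_nadd_left (rank_lt κ g j) _)
    clear IH'
    constructor
    -- e1 : typ G = Q → typ (add G H) ≠ P
    case e1 =>
      intro hG hS
      rw [add_mk] at hS
      obtain ⟨-, -, hallO⟩ := (typ_P_iff _ _).1 hS
      cases hH : typ (mk κ g) with
      | N =>
        obtain ⟨j, hjP⟩ := (typ_N_iff _ _).1 hH
        exact (m2 j).b6 hG hjP (hallO (Sum.inr j))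
      | O =>
        obtain ⟨-, ⟨j0⟩, hallN⟩ := (typ_O_iff _ _).1 hH
        exact (m2 j0).b2 hG (hallN j0) (hallO (Sum.inr j0))
      | P =>
        obtain ⟨i, hiO⟩ := Q_exists_nonO hG
        have hiS : typ (add (f i) (mk κ g)) = O := hallO (Sum.inl i)
        cases hit : typ (f i) with
        | N => exact (m1 i).c8 hit hH hiS
        | O => exact hiO hit
        | P => exact Q_no_P hG i hit
        | Q => exact (m1 i).b6 hit hH hiS
      | Q =>
        obtain ⟨i, hiO⟩ := Q_exists_nonO hG
        have hiS : typ (add (f i) (mk κ g)) = O := hallO (Sum.inl i)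
        cases hit : typ (f i) with
        | N => exact (m1 i).b1 hit hH hiS
        | O => exact hiO hit
        | P => exact Q_no_P hG i hit
        | Q =>
          obtain ⟨j, hjO⟩ := Q_exists_nonO hH
          have hjS : typ (add (mk ι f) (g j)) = O := hallO (Sum.inr j)
          cases hjt : typ (g j) with
          | N => exact (m2 j).b2 hG hjt hjS
          | O => exact hjO hjt
          | P => exact Q_no_P hH j hjt
          | Q =>
            -- typ (f i + H) = O forces typ (f i + g j) = N, contradicting b3
            cases hfi : f i with | mk α a =>
            rw [hfi, add_mk] at hiS
            obtain ⟨-, -, hallN'⟩ := (typ_O_iff _ _).1 hiS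
            have : typ (add (mk α a) (g j)) = N := hallN' (Sum.inr j)
            rw [hfi] at hit
            exact (hfi ▸ (m3 i j)).b3 hit hjt this
    -- b1 : typ G = N → typ H = Q → typ (add G H) ≠ O
    case b1 =>
      intro hG hH hS
      rw [add_mk] at hS
      obtain ⟨-, -, hallN⟩ := (typ_O_iff _ _).1 hS
      obtain ⟨i, hiP⟩ := (typ_N_iff _ _).1 hG
      have : typ (add (f i) (mk κ g)) = N := hallN (Sum.inl i)
      rw [typ_add_comm] at this
      exact (m1s i).b5 hH hiP this
    -- b2 : typ G = Q → typ H = N → typ (add G H) ≠ O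
    case b2 =>
      intro hG hH hS
      rw [add_mk] at hS
      obtain ⟨-, -, hallN⟩ := (typ_O_iff _ _).1 hS
      obtain ⟨j, hjP⟩ := (typ_N_iff _ _).1 hH
      exact (m2 j).b5 hG hjP (hallN (Sum.inr j))
    -- b3 : typ G = Q → typ H = Q → typ (add G H) ≠ N
    case b3 =>
      intro hG hH hS
      rw [add_mk] at hS
      obtain ⟨x, hxP⟩ := (typ_N_iff _ _).1 hS
      cases x with
      | inl i =>
        have : typ (add (f i) (mk κ g)) = P := hxP
        rw [typ_add_comm] at this
        exact (m1s i).e1 hH this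
      | inr j => exact (m2 j).e1 hG hxP
    -- b5 : typ G = Q → typ H = P → typ (add G H) ≠ N
    case b5 =>
      intro hG hH hS
      rw [add_mk] at hS
      obtain ⟨x, hxP⟩ := (typ_N_iff _ _).1 hS
      cases x with
      | inl i =>
        have hxP' : typ (add (f i) (mk κ g)) = P := hxP
        cases hit : typ (f i) with
        | N => exact (m1 i).c1 hit hH hxP'
        | O => exact (m1 i).c2 hit hH hxP'
        | P => exact Q_no_P hG i hit
        | Q => exact (m1 i).e1 hit hxP'
      | inr j => exact (m2 j).e1 hG hxP
    -- b6 : typ G = Q → typ H = P → typ (add G H) ≠ O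
    case b6 =>
      intro hG hH hS
      rw [add_mk] at hS
      obtain ⟨-, -, hallN⟩ := (typ_O_iff _ _).1 hS
      obtain ⟨i, hiN⟩ := Q_exists_nonN hG
      have hiS : typ (add (f i) (mk κ g)) = N := hallN (Sum.inl i)
      cases hit : typ (f i) with
      | N => exact hiN hit
      | O => exact (m1 i).c3 hit hH hiS
      | P => exact Q_no_P hG i hit
      | Q => exact (m1 i).b5 hit hH hiS
    -- c1 : typ G = N → typ H = P → typ (add G H) ≠ P
    case c1 =>
      intro hG hH hS
      rw [add_mk] at hS
      obtain ⟨-, -, hallO⟩ := (typ_P_iff _ _).1 hS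
      obtain ⟨i, hiP⟩ := (typ_N_iff _ _).1 hG
      exact (m1 i).c5 hiP hH (hallO (Sum.inl i))
    -- c2 : typ G = O → typ H = P → typ (add G H) ≠ P
    case c2 =>
      intro hG hH hS
      rw [add_mk] at hS
      obtain ⟨-, -, hallO⟩ := (typ_P_iff _ _).1 hS
      obtain ⟨-, ⟨i0⟩, hallN⟩ := (typ_O_iff _ _).1 hG
      exact (m1 i0).c8 (hallN i0) hH (hallO (Sum.inl i0))
    -- c3 : typ G = O → typ H = P → typ (add G H) ≠ N
    case c3 =>
      intro hG hH hS
      rw [add_mk] at hS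
      obtain ⟨x, hxP⟩ := (typ_N_iff _ _).1 hS
      obtain ⟨-, -, hallN⟩ := (typ_O_iff _ _).1 hG
      obtain ⟨-, -, hallO⟩ := (typ_P_iff _ _).1 hH
      cases x with
      | inl i => exact (m1 i).c1 (hallN i) hH hxP
      | inr j => exact (m2 j).c4 hG (hallO j) hxP
    -- c4 : typ G = O → typ H = O → typ (add G H) ≠ P
    case c4 =>
      intro hG hH hS
      rw [add_mk] at hS
      obtain ⟨-, -, hallO⟩ := (typ_P_iff _ _).1 hS
      obtain ⟨-, ⟨i0⟩, hallN⟩ := (typ_O_iff _ _).1 hG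
      exact (m1 i0).c7 (hallN i0) hH (hallO (Sum.inl i0))
    -- c5 : typ G = P → typ H = P → typ (add G H) ≠ O
    case c5 =>
      intro hG hH hS
      rw [add_mk] at hS
      obtain ⟨-, ⟨x⟩, hallN⟩ := (typ_O_iff _ _).1 hS
      obtain ⟨-, -, hallOG⟩ := (typ_P_iff _ _).1 hG
      obtain ⟨-, -, hallOH⟩ := (typ_P_iff _ _).1 hH
      cases x with
      | inl i => exact (m1 i).c3 (hallOG i) hH (hallN (Sum.inl i))
      | inr j =>
        have : typ (add (mk ι f) (g j)) = N := hallN (Sum.inr j)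
        rw [typ_add_comm] at this
        exact (m2s j).c3 (hallOH j) hG this
    -- c7 : typ G = N → typ H = O → typ (add G H) ≠ O
    case c7 =>
      intro hG hH hS
      rw [add_mk] at hS
      obtain ⟨-, -, hallN⟩ := (typ_O_iff _ _).1 hS
      obtain ⟨i, hiP⟩ := (typ_N_iff _ _).1 hG
      have : typ (add (f i) (mk κ g)) = N := hallN (Sum.inl i)
      rw [typ_add_comm] at this
      exact (m1s i).c3 hH hiP this
    -- c8 : typ G = N → typ H = P → typ (add G H) ≠ O
    case c8 =>
      intro hG hH hS
      rw [add_mk] at hS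
      obtain ⟨-, -, hallN⟩ := (typ_O_iff _ _).1 hS
      obtain ⟨i, hiP⟩ := (typ_N_iff _ _).1 hG
      exact (m1 i).c9 hiP hH (hallN (Sum.inl i))
    -- c9 : typ G = P → typ H = P → typ (add G H) ≠ N
    case c9 =>
      intro hG hH hS
      rw [add_mk] at hS
      obtain ⟨x, hxP⟩ := (typ_N_iff _ _).1 hS
      obtain ⟨-, -, hallOG⟩ := (typ_P_iff _ _).1 hG
      obtain ⟨-, -, hallOH⟩ := (typ_P_iff _ _).1 hH
      cases x with
      | inl i => exact (m1 i).c2 (hallOG i) hH hxP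
      | inr j =>
        have : typ (add (mk ι f) (g j)) = P := hxP
        rw [typ_add_comm] at this
        exact (m2s j).c2 (hallOH j) hG this

theorem notP_left (G H : G3) (h : typ G = Q) : typ (add G H) ≠ P :=
  (pk G H).e1 h

theorem notP_right (G H : G3) (h : typ H = Q) : typ (add G H) ≠ P := by
  rw [typ_add_comm]
  exact (pk H G).e1 h

theorem notP3 (A B C : G3) (h : typ A = Q ∨ typ B = Q ∨ typ C = Q) :
    typ (add (add A B) C) ≠ P := by
  rcases h with h | h | h
  · rw [typ_add_assoc]
    exact notP_left _ _ h
  · rw [show typ (add (add A B) C) = typ (add (add B A) C) from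
      typ_iso (add_congr_left (add_comm_iso A B) C), typ_add_assoc]
    exact notP_left _ _ h
  · exact notP_right _ _ h

theorem Q_treble (G : G3) (hG : typ G = PType.Q) :
    typ (add (add G G) G) = PType.Q ∧ typ (add (add G G) G) ≠ PType.O := by
  suffices key : typ (add (add G G) G) = PType.Q by
    refine ⟨key, ?_⟩
    rw [key]
    exact fun h => PType.noConfusion h
  have hP : typ (add (add G G) G) ≠ P := notP3 _ _ _ (Or.inl hG)
  cases G with | mk ι f =>
  have hN : typ (add (add (mk ι f) (mk ι f)) (mk ι f)) ≠ N := by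
    intro hS
    rw [add_mk, add_mk] at hS
    obtain ⟨x, hxP⟩ := (typ_N_iff _ _).1 hS
    rcases x with (i | i) | i
    · exact notP3 (f i) (mk ι f) (mk ι f) (Or.inr (Or.inr hG)) hxP
    · exact notP3 (mk ι f) (f i) (mk ι f) (Or.inl hG) hxP
    · exact notP3 (mk ι f) (mk ι f) (f i) (Or.inl hG) hxP
  have hO : typ (add (add (mk ι f) (mk ι f)) (mk ι f)) ≠ O := by
    intro hS
    rw [add_mk, add_mk] at hS
    obtain ⟨-, -, hallN⟩ := (typ_O_iff _ _).1 hS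
    obtain ⟨i0⟩ := Q_nonempty hG
    have hY : typ (add (add (mk ι f) (mk ι f)) (f i0)) = N := hallN (Sum.inr i0)
    cases hfi : f i0 with | mk α a =>
    rw [hfi, add_mk, add_mk] at hY
    obtain ⟨y, hyP⟩ := (typ_N_iff _ _).1 hY
    rcases y with (i | i) | b
    · exact notP3 (f i) (mk ι f) (mk α a) (Or.inr (Or.inl hG)) hyP
    · exact notP3 (mk ι f) (f i) (mk α a) (Or.inl hG) hyP
    · exact notP3 (mk ι f) (mk ι f) (a b) (Or.inl hG) hyP
  cases hT : typ (add (add (mk ι f) (mk ι f)) (mk ι f)) with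
  | N => exact absurd hT hN
  | O => exact absurd hT hO
  | P => exact absurd hT hP
  | Q => rfl

end G3
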